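/- Let p₁, p₂, p₃, p₄ be distinct primes and n = p₁p₂p₃p₄. Then the Randić index of the 4-dprime divisor function graph Γ₄ equals (47 + 60√3 + 12√10 + 8√30)/30, as a real number. -/

import Mathlib

set_option maxRecDepth 100000

/-- The `k`-dprime divisor function graph on the positive divisors of `n`:
two distinct divisors `u`, `v` are adjacent iff `u ∣ v` or `v ∣ u`. -/
def divisorGraph (n : ℕ) : SimpleGraph {d : ℕ // d ∈ n.divisors} where
  Adj u v := u ≠ v ∧ ((u : ℕ) ∣ (v : ℕ) ∨ (v : ℕ) ∣ (u : ℕ))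
  symm := ⟨fun _ _ ⟨h, hd⟩ => ⟨h.symm, hd.symm⟩⟩
  loopless := ⟨fun _ ⟨h, _⟩ => h rfl⟩

instance (n : ℕ) : DecidableRel (divisorGraph n).Adj :=
  fun _ _ => instDecidableAnd

/-- Concrete model: subsets of `Fin 4`, adjacent iff comparable. -/
def G4 : SimpleGraph (Finset (Fin 4)) where
  Adj u v := u ≠ v ∧ (u ⊆ v ∨ v ⊆ u)
  symm := ⟨fun _ _ ⟨h, hd⟩ => ⟨h.symm, hd.symm⟩⟩
  loopless := ⟨fun _ ⟨h, _⟩ => h rfl⟩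

instance : DecidableRel G4.Adj := fun _ _ => instDecidableAnd

/-- Product of degrees along an edge of `G4`. -/
def c4 : Sym2 (Finset (Fin 4)) → ℕ :=
  Sym2.lift ⟨fun u v => G4.degree u * G4.degree v, fun _ _ => Nat.mul_comm _ _⟩

lemma iso_degree {V W : Type*} {G : SimpleGraph V} {G' : SimpleGraph W} (f : G ≃g G') (v : V)
    [Fintype (G.neighborSet v)] [Fintype (G'.neighborSet (f v))] :
    G.degree v = G'.degree (f v) := by
  rw [← SimpleGraph.card_neighborSet_eq_degree, ← SimpleGraph.card_neighborSet_eq_degree]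
  exact Fintype.card_congr (f.mapNeighborSet v)

lemma prod_dvd_prod_iff_subset (p : Fin 4 → ℕ) (hp : ∀ i, (p i).Prime)
    (hinj : Function.Injective p) {S T : Finset (Fin 4)} :
    (∏ i ∈ S, p i) ∣ (∏ i ∈ T, p i) ↔ S ⊆ T := by
  constructor
  · intro h i hi
    have h1 : p i ∣ ∏ j ∈ T, p j := (Finset.dvd_prod_of_mem p hi).trans h
    obtain ⟨j, hj, hdvd⟩ := ((hp i).prime.dvd_finset_prod_iff p).1 h1
    have : p i = p j := (Nat.prime_dvd_prime_iff_eq (hp i) (hp j)).1 hdvd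
    rwa [hinj this]
  · exact fun h => Finset.prod_dvd_prod_of_subset _ _ _ h

lemma dvd_prod_exists_subset (p : Fin 4 → ℕ) (hp : ∀ i, (p i).Prime)
    {S : Finset (Fin 4)} : ∀ {d : ℕ}, d ∣ ∏ i ∈ S, p i →
    ∃ T, T ⊆ S ∧ d = ∏ i ∈ T, p i := by
  induction S using Finset.induction_on with
  | empty =>
    intro d hd
    simp only [Finset.prod_empty] at hd
    exact ⟨∅, Finset.Subset.refl _, by simpa using Nat.dvd_one.1 hd⟩
  | insert a S ha ih =>
    intro d hd
    rw [Finset.prod_insert ha] at hd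
    by_cases hpa : p a ∣ d
    · obtain ⟨d', rfl⟩ := hpa
      have hd' : d' ∣ ∏ i ∈ S, p i := (Nat.mul_dvd_mul_iff_left (hp a).pos).1 hd
      obtain ⟨T, hTS, rfl⟩ := ih hd'
      refine ⟨insert a T, Finset.insert_subset_insert _ hTS, ?_⟩
      rw [Finset.prod_insert (fun h => ha (hTS h))]
    · have hcop : Nat.Coprime d (p a) := ((hp a).coprime_iff_not_dvd.2 hpa).symm
      have hd' : d ∣ ∏ i ∈ S, p i := (hcop.dvd_mul_left).1 hd
      obtain ⟨T, hTS, rfl⟩ := ih hd'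
      exact ⟨T, hTS.trans (Finset.subset_insert _ _), rfl⟩

lemma sqrt_inv_eval :
    (16:ℕ) • (Real.sqrt 120)⁻¹ + (12:ℕ) • (Real.sqrt 90)⁻¹ + (24:ℕ) • (Real.sqrt 48)⁻¹
    + (12:ℕ) • (Real.sqrt 64)⁻¹ + (1:ℕ) • (Real.sqrt 225)⁻¹
    = (47 + 60 * Real.sqrt 3 + 12 * Real.sqrt 10 + 8 * Real.sqrt 30) / 30 := by
  have h120 : Real.sqrt 120 = 2 * Real.sqrt 30 := by
    rw [show (120:ℝ) = 2^2 * 30 by norm_num, Real.sqrt_mul (by positivity),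
      Real.sqrt_sq (by norm_num)]
  have h90 : Real.sqrt 90 = 3 * Real.sqrt 10 := by
    rw [show (90:ℝ) = 3^2 * 10 by norm_num, Real.sqrt_mul (by positivity),
      Real.sqrt_sq (by norm_num)]
  have h48 : Real.sqrt 48 = 4 * Real.sqrt 3 := by
    rw [show (48:ℝ) = 4^2 * 3 by norm_num, Real.sqrt_mul (by positivity),
      Real.sqrt_sq (by norm_num)]
  have h64 : Real.sqrt 64 = 8 := by
    rw [show (64:ℝ) = 8^2 by norm_num, Real.sqrt_sq (by norm_num)]
  have h225 : Real.sqrt 225 = 15 := by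
    rw [show (225:ℝ) = 15^2 by norm_num, Real.sqrt_sq (by norm_num)]
  have p3 : (0:ℝ) < Real.sqrt 3 := Real.sqrt_pos.2 (by norm_num)
  have p10 : (0:ℝ) < Real.sqrt 10 := Real.sqrt_pos.2 (by norm_num)
  have p30 : (0:ℝ) < Real.sqrt 30 := Real.sqrt_pos.2 (by norm_num)
  have i3 : (Real.sqrt 3)⁻¹ = Real.sqrt 3 / 3 := by field_simp; rw [Real.sq_sqrt (by norm_num)]
  have i10 : (Real.sqrt 10)⁻¹ = Real.sqrt 10 / 10 := by field_simp; rw [Real.sq_sqrt (by norm_num)]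
  have i30 : (Real.sqrt 30)⁻¹ = Real.sqrt 30 / 30 := by field_simp; rw [Real.sq_sqrt (by norm_num)]
  simp only [nsmul_eq_mul, h120, h90, h48, h64, h225, mul_inv, i3, i10, i30]
  push_cast
  ring

lemma G4_sum : ∑ e ∈ G4.edgeFinset, (Real.sqrt (c4 e))⁻¹
    = (47 + 60 * Real.sqrt 3 + 12 * Real.sqrt 10 + 8 * Real.sqrt 30) / 30 := by
  rw [Finset.sum_comp (fun m : ℕ => (Real.sqrt m)⁻¹) c4]
  rw [show G4.edgeFinset.image c4 = {120, 90, 48, 64, 225} from by decide]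
  rw [Finset.sum_insert (by decide), Finset.sum_insert (by decide),
    Finset.sum_insert (by decide), Finset.sum_insert (by decide), Finset.sum_singleton]
  rw [show (Finset.filter (fun a => c4 a = 120) G4.edgeFinset).card = 16 from by decide,
    show (Finset.filter (fun a => c4 a = 90) G4.edgeFinset).card = 12 from by decide,
    show (Finset.filter (fun a => c4 a = 48) G4.edgeFinset).card = 24 from by decide,
    show (Finset.filter (fun a => c4 a = 64) G4.edgeFinset).card = 12 from by decide,
    show (Finset.filter (fun a => c4 a = 225) G4.edgeFinset).card = 1 from by decide]
  have h := sqrt_inv_eval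
  simp only [nsmul_eq_mul] at h ⊢
  push_cast at h ⊢
  linarith [h]

/-- Main computation for a general injective family of four primes. -/
lemma randic_aux (p : Fin 4 → ℕ) (hp : ∀ i, (p i).Prime) (hinj : Function.Injective p)
    (n : ℕ) (hn' : n = ∏ i, p i) :
    ∑ e ∈ (divisorGraph n).edgeFinset,
      Sym2.lift ⟨fun u v =>
          (1 : ℝ) / Real.sqrt (((divisorGraph n).degree u : ℝ) * ((divisorGraph n).degree v : ℝ)),
        fun u v => by beta_reduce; rw [mul_comm (((divisorGraph n).degree u : ℝ))]⟩ e =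
      (47 + 60 * Real.sqrt 3 + 12 * Real.sqrt 10 + 8 * Real.sqrt 30) / 30 := by
  have hn0 : n ≠ 0 := by
    rw [hn']
    exact Finset.prod_ne_zero_iff.2 fun i _ => (hp i).ne_zero
  -- the bijection from subsets of Fin 4 to divisors of n
  have hmem : ∀ S : Finset (Fin 4), (∏ i ∈ S, p i) ∈ n.divisors := fun S =>
    Nat.mem_divisors.2 ⟨hn' ▸ Finset.prod_dvd_prod_of_subset _ _ _ (Finset.subset_univ S), hn0⟩
  let φ : Finset (Fin 4) → {d : ℕ // d ∈ n.divisors} := fun S => ⟨∏ i ∈ S, p i, hmem S⟩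
  have hφinj : Function.Injective φ := by
    intro S T h
    have h' : (∏ i ∈ S, p i) = ∏ i ∈ T, p i := congrArg Subtype.val h
    exact Finset.Subset.antisymm
      ((prod_dvd_prod_iff_subset p hp hinj).1 (h' ▸ dvd_refl _))
      ((prod_dvd_prod_iff_subset p hp hinj).1 (h' ▸ dvd_refl _))
  have hφsurj : Function.Surjective φ := by
    rintro ⟨d, hd⟩
    obtain ⟨hdn, -⟩ := Nat.mem_divisors.1 hd
    rw [hn'] at hdn
    obtain ⟨T, -, rfl⟩ := dvd_prod_exists_subset p hp hdn
    exact ⟨T, rfl⟩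
  let eφ : Finset (Fin 4) ≃ {d : ℕ // d ∈ n.divisors} := Equiv.ofBijective φ ⟨hφinj, hφsurj⟩
  let f : G4 ≃g divisorGraph n :=
    { toEquiv := eφ
      map_rel_iff' := by
        intro S T
        show (divisorGraph n).Adj (φ S) (φ T) ↔ G4.Adj S T
        constructor
        · rintro ⟨hne, hdvd⟩
          refine ⟨fun h => hne (congrArg φ h), ?_⟩
          rcases hdvd with h | h
          · exact Or.inl ((prod_dvd_prod_iff_subset p hp hinj).1 h)
          · exact Or.inr ((prod_dvd_prod_iff_subset p hp hinj).1 h)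
        · rintro ⟨hne, hsub⟩
          refine ⟨fun h => hne (hφinj h), ?_⟩
          rcases hsub with h | h
          · exact Or.inl ((prod_dvd_prod_iff_subset p hp hinj).2 h)
          · exact Or.inr ((prod_dvd_prod_iff_subset p hp hinj).2 h) }
  rw [← G4_sum]
  refine Finset.sum_nbij' (Sym2.map f.symm) (Sym2.map f) ?_ ?_ ?_ ?_ ?_
  · intro e he
    rw [SimpleGraph.mem_edgeFinset] at he ⊢
    exact (SimpleGraph.Iso.map_mem_edgeSet_iff f.symm).2 he
  · intro e he
    rw [SimpleGraph.mem_edgeFinset] at he ⊢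
    exact (SimpleGraph.Iso.map_mem_edgeSet_iff f).2 he
  · intro e _
    induction e using Sym2.ind with
    | _ u v => simp [Sym2.map_map]
  · intro e _
    induction e using Sym2.ind with
    | _ u v => simp [Sym2.map_map]
  · intro e _
    induction e using Sym2.ind with
    | _ u v =>
      simp only [Sym2.map_pair_eq, Sym2.lift_mk, c4]
      rw [← iso_degree f.symm u, ← iso_degree f.symm v]
      push_cast
      rw [one_div]

/-- The Randić index of `Γ₄`: the sum over all edges of `1 / √(deg u · deg v)`. -/
theorem stmt_18 (p₁ p₂ p₃ p₄ : ℕ) (hp₁ : p₁.Prime) (hp₂ : p₂.Prime)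
    (hp₃ : p₃.Prime) (hp₄ : p₄.Prime)
    (h12 : p₁ ≠ p₂) (h13 : p₁ ≠ p₃) (h14 : p₁ ≠ p₄)
    (h23 : p₂ ≠ p₃) (h24 : p₂ ≠ p₄) (h34 : p₃ ≠ p₄)
    (n : ℕ) (hn : n = p₁ * p₂ * p₃ * p₄) :
    ∑ e ∈ (divisorGraph n).edgeFinset,
      Sym2.lift ⟨fun u v =>
          (1 : ℝ) / Real.sqrt (((divisorGraph n).degree u : ℝ) * ((divisorGraph n).degree v : ℝ)),
        fun u v => by beta_reduce; rw [mul_comm (((divisorGraph n).degree u : ℝ))]⟩ e =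
      (47 + 60 * Real.sqrt 3 + 12 * Real.sqrt 10 + 8 * Real.sqrt 30) / 30 := by
  refine randic_aux ![p₁, p₂, p₃, p₄] ?_ ?_ n ?_
  · intro i; fin_cases i <;> simpa
  · intro i j h
    fin_cases i <;> fin_cases j <;>
      simp_all [Matrix.cons_val_zero, Matrix.cons_val_one, Matrix.head_cons, Matrix.cons_val_succ]
  · rw [hn, Fin.prod_univ_four]
    simp
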